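/- Let n ≥ 4 and let DP_n be the n-element drastic product chain with elements 0 = a_{n−1} < ⋯ < a_1 < 1. Let X_n = {(a_i, a_j) : n−1 ≥ i ≥ j ≥ 2}, ordered coordinate-wise by the chain order, and for each up-set U of X_n let K_n^U = K_n^∅ ∪ {(x,y) : (x,y) ∈ U or (y,x) ∈ U}, where K_n^∅ = {(x,1), (1,x), (x,a_1), (a_1,x) : x ∈ DP_n}. Then a subset S of K(DP_n) is the universe of an admissible subalgebra of the twist-product K(DP_n) if and only if S = K_n^U for some up-set U of X_n; moreover, for up-sets U and W of X_n, K_n^U ⊆ K_n^W if and only if U ⊆ W. -/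

import Mathlib

/-- The top element `1` of the `n`-element drastic product chain
`DP_n = {0 = a_{n-1} < ... < a_1 < 1}`, realized on `Fin n` (the element `a_i`
corresponds to the index `n - 1 - i`). -/
def dpTop (n : ℕ) (hn : 2 ≤ n) : Fin n := ⟨n - 1, by omega⟩

/-- The coatom `a_1` of the drastic product chain `DP_n`. -/
def dpCoatom (n : ℕ) (hn : 2 ≤ n) : Fin n := ⟨n - 2, by omega⟩

/-- The bottom element `0 = a_{n-1}` of the drastic product chain `DP_n`. -/
def dpBot (n : ℕ) (hn : 2 ≤ n) : Fin n := ⟨0, by omega⟩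

/-- The drastic product: `a·b = 0` if `a ≠ 1` and `b ≠ 1`, else `a ∧ b`. -/
def dpMul (n : ℕ) (hn : 2 ≤ n) (a b : Fin n) : Fin n :=
  if a ≠ dpTop n hn ∧ b ≠ dpTop n hn then dpBot n hn else min a b

/-- The residual of the drastic product: `x → y = 1` if `x ≤ y`, `x → y = y`
if `x = 1 > y`, and `x → y = a_1` if `y < x < 1`. -/
def dpImp (n : ℕ) (hn : 2 ≤ n) (a b : Fin n) : Fin n :=
  if a ≤ b then dpTop n hn else if a = dpTop n hn then b else dpCoatom n hn

/-- Join in the twist-product `K(DP_n)`. -/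
def dpKjoin (n : ℕ) (x y : Fin n × Fin n) : Fin n × Fin n :=
  (max x.1 y.1, min x.2 y.2)

/-- Meet in the twist-product `K(DP_n)`. -/
def dpKmeet (n : ℕ) (x y : Fin n × Fin n) : Fin n × Fin n :=
  (min x.1 y.1, max x.2 y.2)

/-- Product in the twist-product `K(DP_n)`. -/
def dpKmul (n : ℕ) (hn : 2 ≤ n) (x y : Fin n × Fin n) : Fin n × Fin n :=
  (dpMul n hn x.1 y.1, min (dpImp n hn x.1 y.2) (dpImp n hn y.1 x.2))

/-- Implication in the twist-product `K(DP_n)`. -/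
def dpKhimp (n : ℕ) (hn : 2 ≤ n) (x y : Fin n × Fin n) : Fin n × Fin n :=
  (min (dpImp n hn x.1 y.1) (dpImp n hn y.2 x.2), dpMul n hn x.1 y.2)

/-- An admissible subalgebra of `K(DP_n)`: contains `(1,1)`, `(0,1)` and
`(a,1)` for all `a`, and is closed under the twist operations. -/
def dpAdmissible (n : ℕ) (hn : 2 ≤ n) (S : Set (Fin n × Fin n)) : Prop :=
  (dpTop n hn, dpTop n hn) ∈ S ∧ (dpBot n hn, dpTop n hn) ∈ S ∧
  (∀ a : Fin n, (a, dpTop n hn) ∈ S) ∧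
  ∀ x ∈ S, ∀ y ∈ S, dpKjoin n x y ∈ S ∧ dpKmeet n x y ∈ S ∧
    dpKmul n hn x y ∈ S ∧ dpKhimp n hn x y ∈ S

/-- The set `K_n^∅ = {(x,1), (1,x), (x,a_1), (a_1,x) : x ∈ DP_n}`. -/
def dpKempty (n : ℕ) (hn : 2 ≤ n) : Set (Fin n × Fin n) :=
  {p | p.2 = dpTop n hn ∨ p.1 = dpTop n hn ∨
       p.2 = dpCoatom n hn ∨ p.1 = dpCoatom n hn}

/-- The indexing poset `X_n = {(a_i, a_j) : n-1 ≥ i ≥ j ≥ 2}`, ordered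
coordinate-wise. In the `Fin n` realization (`a_i ↦ n - 1 - i`) these are
the pairs `(u,v)` with `u ≤ v ≤ n - 3`. -/
def dpX (n : ℕ) : Set (Fin n × Fin n) :=
  {p | p.1 ≤ p.2 ∧ (p.2 : ℕ) ≤ n - 3}

/-- An up-set of the coordinate-wise ordered poset `X_n`. -/
def dpIsUpset (n : ℕ) (U : Set (Fin n × Fin n)) : Prop :=
  U ⊆ dpX n ∧ ∀ p ∈ U, ∀ q ∈ dpX n, p.1 ≤ q.1 → p.2 ≤ q.2 → q ∈ U

/-- `K_n^U = K_n^∅ ∪ {(x,y) : (x,y) ∈ U or (y,x) ∈ U}`. -/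
def dpKU (n : ℕ) (hn : 2 ≤ n) (U : Set (Fin n × Fin n)) : Set (Fin n × Fin n) :=
  dpKempty n hn ∪ {p | p ∈ U ∨ ((p.2, p.1) : Fin n × Fin n) ∈ U}

section DPaux
variable {n : ℕ}

lemma dp_le_top (h : 2 ≤ n) (a : Fin n) : a ≤ dpTop n h := by
  have := a.isLt
  rw [Fin.le_def]
  simp only [dpTop]
  omega

lemma dp_ne_top_le_coatom (h : 2 ≤ n) {a : Fin n} (ha : a ≠ dpTop n h) :
    a ≤ dpCoatom n h := by
  have h1 := a.isLt
  have h2 : (a : ℕ) ≠ n - 1 := fun hh => ha (Fin.ext hh)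
  rw [Fin.le_def]
  simp only [dpCoatom]
  omega

lemma dp_coatom_le_top (h : 2 ≤ n) : dpCoatom n h ≤ dpTop n h := by
  rw [Fin.le_def]; simp only [dpCoatom, dpTop]; omega

lemma dp_coatom_ne_top (h : 2 ≤ n) : dpCoatom n h ≠ dpTop n h := by
  simp only [Ne, Fin.ext_iff, dpCoatom, dpTop]; omega

lemma dpImp_of_le (h : 2 ≤ n) {a b : Fin n} (hab : a ≤ b) :
    dpImp n h a b = dpTop n h := by
  unfold dpImp; rw [if_pos hab]

lemma dpImp_coatom (h : 2 ≤ n) {a b : Fin n} (h1 : ¬ a ≤ b) (h2 : a ≠ dpTop n h) :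
    dpImp n h a b = dpCoatom n h := by
  unfold dpImp; rw [if_neg h1, if_neg h2]

lemma dpImp_top_left (h : 2 ≤ n) (b : Fin n) : dpImp n h (dpTop n h) b = b := by
  unfold dpImp
  split_ifs with h1 h2
  · exact le_antisymm h1 (dp_le_top h b)
  · rfl
  · exact absurd rfl h2

lemma dpImp_or (h : 2 ≤ n) {a : Fin n} (ha : a ≠ dpTop n h) (b : Fin n) :
    dpImp n h a b = dpTop n h ∨ dpImp n h a b = dpCoatom n h := by
  by_cases hab : a ≤ b
  · exact Or.inl (dpImp_of_le h hab)
  · exact Or.inr (dpImp_coatom h hab ha)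

lemma dpMul_top_left (h : 2 ≤ n) (b : Fin n) : dpMul n h (dpTop n h) b = b := by
  unfold dpMul
  rw [if_neg (by simp), min_eq_right (dp_le_top h b)]

lemma dpMul_top_right (h : 2 ≤ n) (a : Fin n) : dpMul n h a (dpTop n h) = a := by
  unfold dpMul
  rw [if_neg (by simp), min_eq_left (dp_le_top h a)]

lemma dpMul_bot (h : 2 ≤ n) {a b : Fin n} (ha : a ≠ dpTop n h) (hb : b ≠ dpTop n h) :
    dpMul n h a b = dpBot n h := by
  unfold dpMul; rw [if_pos ⟨ha, hb⟩]

lemma swap_mem_KU (h : 2 ≤ n) {U : Set (Fin n × Fin n)} {p : Fin n × Fin n}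
    (hp : p ∈ dpKU n h U) : ((p.2, p.1) : Fin n × Fin n) ∈ dpKU n h U := by
  obtain ⟨p1, p2⟩ := p
  simp only [dpKU, dpKempty, Set.mem_union, Set.mem_setOf_eq] at *
  tauto

lemma dp_mem_Kempty_KU (h : 2 ≤ n) {U : Set (Fin n × Fin n)} {p : Fin n × Fin n}
    (hp : p.2 = dpTop n h ∨ p.1 = dpTop n h ∨
      p.2 = dpCoatom n h ∨ p.1 = dpCoatom n h) :
    p ∈ dpKU n h U := Set.mem_union_left _ hp

end DPaux

section DPclosure
variable {n : ℕ}

lemma mem_KU_iff (h : 2 ≤ n) {U : Set (Fin n × Fin n)} (hU : dpIsUpset n U)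
    (p : Fin n × Fin n) :
    p ∈ dpKU n h U ↔ (n - 2 ≤ (p.1 : ℕ) ∨ n - 2 ≤ (p.2 : ℕ)) ∨
      ((min p.1 p.2, max p.1 p.2) : Fin n × Fin n) ∈ U := by
  obtain ⟨p1, p2⟩ := p
  dsimp only
  constructor
  · intro hp
    rcases hp with hk | hu
    · left
      rcases hk with h1 | h1 | h1 | h1 <;>
        simp only [Fin.ext_iff, dpTop, dpCoatom] at h1 <;> omega
    · right
      rcases hu with hu | hu
      · have hle : p1 ≤ p2 := (hU.1 hu).1
        simpa [min_eq_left hle, max_eq_right hle] using hu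
      · have hle : p2 ≤ p1 := (hU.1 hu).1
        simpa [min_eq_right hle, max_eq_left hle] using hu
  · intro hp
    rcases hp with hv | hu
    · refine Set.mem_union_left _ ?_
      have := p1.isLt; have := p2.isLt
      simp only [dpKempty, Set.mem_setOf_eq, Fin.ext_iff, dpTop, dpCoatom]
      omega
    · refine Set.mem_union_right _ ?_
      rcases le_total p1 p2 with hle | hle
      · rw [min_eq_left hle, max_eq_right hle] at hu
        exact Or.inl hu
      · rw [min_eq_right hle, max_eq_left hle] at hu
        exact Or.inr hu

lemma dp_join_closed (h : 2 ≤ n) {U : Set (Fin n × Fin n)} (hU : dpIsUpset n U)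
    {x y : Fin n × Fin n} (hx : x ∈ dpKU n h U) (hy : y ∈ dpKU n h U) :
    dpKjoin n x y ∈ dpKU n h U := by
  rw [mem_KU_iff h hU] at hx hy ⊢
  obtain ⟨x1, x2⟩ := x; obtain ⟨y1, y2⟩ := y
  simp only [dpKjoin] at *
  by_cases hv : n - 2 ≤ ((max x1 y1 : Fin n) : ℕ) ∨ n - 2 ≤ ((min x2 y2 : Fin n) : ℕ)
  · exact Or.inl hv
  push_neg at hv
  obtain ⟨hv1, hv2⟩ := hv
  have hxm : (x1 : ℕ) ≤ ((max x1 y1 : Fin n) : ℕ) := Fin.le_def.mp (le_max_left _ _)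
  have hym : (y1 : ℕ) ≤ ((max x1 y1 : Fin n) : ℕ) := Fin.le_def.mp (le_max_right _ _)
  have hzX : ((min (max x1 y1) (min x2 y2), max (max x1 y1) (min x2 y2)) :
      Fin n × Fin n) ∈ dpX n := by
    refine ⟨min_le_max, ?_⟩
    show ((max (max x1 y1) (min x2 y2) : Fin n) : ℕ) ≤ n - 3
    rcases max_cases (max x1 y1) (min x2 y2) with ⟨he, -⟩ | ⟨he, -⟩ <;> rw [he] <;> omega
  right
  rcases min_cases x2 y2 with ⟨he, hle⟩ | ⟨he, hle⟩
  · -- min x2 y2 = x2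
    have hx2 : (x2 : ℕ) < n - 2 := by rw [← he]; exact hv2
    have hxU : ((min x1 x2, max x1 x2) : Fin n × Fin n) ∈ U := by
      rcases hx with hx | hx
      · exfalso; omega
      · exact hx
    have hle2 : x2 ≤ min x2 y2 := le_of_eq he.symm
    exact hU.2 _ hxU _ hzX (min_le_min (le_max_left _ _) hle2)
      (max_le_max (le_max_left _ _) hle2)
  · have hy2 : (y2 : ℕ) < n - 2 := by rw [← he]; exact hv2
    have hyU : ((min y1 y2, max y1 y2) : Fin n × Fin n) ∈ U := by
      rcases hy with hy | hy
      · exfalso; omega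
      · exact hy
    have hle2 : y2 ≤ min x2 y2 := le_of_eq he.symm
    exact hU.2 _ hyU _ hzX (min_le_min (le_max_right _ _) hle2)
      (max_le_max (le_max_right _ _) hle2)

lemma dp_meet_closed (h : 2 ≤ n) {U : Set (Fin n × Fin n)} (hU : dpIsUpset n U)
    {x y : Fin n × Fin n} (hx : x ∈ dpKU n h U) (hy : y ∈ dpKU n h U) :
    dpKmeet n x y ∈ dpKU n h U := by
  have := swap_mem_KU h (dp_join_closed h hU (swap_mem_KU h hx) (swap_mem_KU h hy))
  exact this

end DPclosure

section DPclosure2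
variable {n : ℕ}

lemma dp_min_TC (h : 2 ≤ n) {a b : Fin n}
    (ha : a = dpTop n h ∨ a = dpCoatom n h) (hb : b = dpTop n h ∨ b = dpCoatom n h) :
    min a b = dpTop n h ∨ min a b = dpCoatom n h := by
  rcases ha with ha | ha <;> rcases hb with hb | hb <;> subst ha <;> subst hb
  · exact Or.inl (min_self _)
  · exact Or.inr (min_eq_right (dp_coatom_le_top h))
  · exact Or.inr (min_eq_left (dp_coatom_le_top h))
  · exact Or.inr (min_self _)

lemma dp_mul_closed (h : 2 ≤ n) {U : Set (Fin n × Fin n)}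
    {x y : Fin n × Fin n} (hx : x ∈ dpKU n h U) (hy : y ∈ dpKU n h U) :
    dpKmul n h x y ∈ dpKU n h U := by
  obtain ⟨x1, x2⟩ := x; obtain ⟨y1, y2⟩ := y
  show (dpMul n h x1 y1, min (dpImp n h x1 y2) (dpImp n h y1 x2)) ∈ dpKU n h U
  by_cases hx1 : x1 = dpTop n h
  · subst hx1
    by_cases hy1 : y1 = dpTop n h
    · subst hy1
      exact dp_mem_Kempty_KU h (Or.inr (Or.inl (dpMul_top_left h _)))
    · rw [dpMul_top_left h]
      by_cases hy2 : y2 = dpTop n h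
      · subst hy2
        rw [dpImp_top_left h]
        rcases dpImp_or h hy1 x2 with hw | hw <;> rw [hw]
        · exact dp_mem_Kempty_KU h (Or.inl (min_self _))
        · exact dp_mem_Kempty_KU h
            (Or.inr (Or.inr (Or.inl (min_eq_right (dp_coatom_le_top h)))))
      · have h2 : min (dpImp n h (dpTop n h) y2) (dpImp n h y1 x2) = y2 := by
          rw [dpImp_top_left h]
          rcases dpImp_or h hy1 x2 with hw | hw <;> rw [hw]
          · exact min_eq_left (dp_le_top h y2)
          · exact min_eq_left (dp_ne_top_le_coatom h hy2)
        rw [h2]; exact hy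
  · by_cases hy1 : y1 = dpTop n h
    · subst hy1
      rw [dpMul_top_right h]
      by_cases hx2 : x2 = dpTop n h
      · subst hx2
        rw [dpImp_top_left h]
        rcases dpImp_or h hx1 y2 with hw | hw <;> rw [hw]
        · exact dp_mem_Kempty_KU h (Or.inl (min_self _))
        · exact dp_mem_Kempty_KU h
            (Or.inr (Or.inr (Or.inl (min_eq_left (dp_coatom_le_top h)))))
      · have h2 : min (dpImp n h x1 y2) (dpImp n h (dpTop n h) x2) = x2 := by
          rw [dpImp_top_left h]
          rcases dpImp_or h hx1 y2 with hw | hw <;> rw [hw]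
          · exact min_eq_right (dp_le_top h x2)
          · exact min_eq_right (dp_ne_top_le_coatom h hx2)
        rw [h2]; exact hx
    · refine dp_mem_Kempty_KU h ?_
      rcases dp_min_TC h (dpImp_or h hx1 y2) (dpImp_or h hy1 x2) with hw | hw
      · exact Or.inl hw
      · exact Or.inr (Or.inr (Or.inl hw))

lemma dp_himp_closed (h : 2 ≤ n) {U : Set (Fin n × Fin n)}
    {x y : Fin n × Fin n} (hx : x ∈ dpKU n h U) (hy : y ∈ dpKU n h U) :
    dpKhimp n h x y ∈ dpKU n h U := by
  obtain ⟨x1, x2⟩ := x; obtain ⟨y1, y2⟩ := y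
  show (min (dpImp n h x1 y1) (dpImp n h y2 x2), dpMul n h x1 y2) ∈ dpKU n h U
  by_cases hx1 : x1 = dpTop n h
  · subst hx1
    by_cases hy2 : y2 = dpTop n h
    · subst hy2
      exact dp_mem_Kempty_KU h (Or.inl (dpMul_top_left h _))
    · rw [dpMul_top_left h, dpImp_top_left h]
      by_cases hy1 : y1 = dpTop n h
      · subst hy1
        rcases dpImp_or h hy2 x2 with hw | hw <;> rw [hw]
        · exact dp_mem_Kempty_KU h (Or.inr (Or.inl (min_self _)))
        · exact dp_mem_Kempty_KU h
            (Or.inr (Or.inr (Or.inr (min_eq_right (dp_coatom_le_top h)))))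
      · have h2 : min y1 (dpImp n h y2 x2) = y1 := by
          rcases dpImp_or h hy2 x2 with hw | hw <;> rw [hw]
          · exact min_eq_left (dp_le_top h y1)
          · exact min_eq_left (dp_ne_top_le_coatom h hy1)
        rw [h2]; exact hy
  · by_cases hy2 : y2 = dpTop n h
    · subst hy2
      rw [dpMul_top_right h, dpImp_top_left h]
      by_cases hx2 : x2 = dpTop n h
      · subst hx2
        rcases dpImp_or h hx1 y1 with hw | hw <;> rw [hw]
        · exact dp_mem_Kempty_KU h (Or.inr (Or.inl (min_self _)))
        · exact dp_mem_Kempty_KU h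
            (Or.inr (Or.inr (Or.inr (min_eq_left (dp_coatom_le_top h)))))
      · have h2 : min (dpImp n h x1 y1) x2 = x2 := by
          rcases dpImp_or h hx1 y1 with hw | hw <;> rw [hw]
          · exact min_eq_right (dp_le_top h x2)
          · exact min_eq_right (dp_ne_top_le_coatom h hx2)
        rw [h2]
        exact swap_mem_KU h hx
    · refine dp_mem_Kempty_KU h ?_
      rcases dp_min_TC h (dpImp_or h hx1 y1) (dpImp_or h hy2 x2) with hw | hw
      · exact Or.inr (Or.inl hw)
      · exact Or.inr (Or.inr (Or.inr hw))
end DPclosure2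

section DPforward
variable {n : ℕ} {S : Set (Fin n × Fin n)}

lemma s_top_fst (h : 2 ≤ n) (hS : dpAdmissible n h S) (a : Fin n) :
    ((dpTop n h, a) : Fin n × Fin n) ∈ S := by
  have h3 := (hS.2.2.2 _ (hS.2.2.1 a) _ hS.1).2.2.2
  have he : dpKhimp n h (a, dpTop n h) (dpTop n h, dpTop n h) = (dpTop n h, a) := by
    show (min (dpImp n h a (dpTop n h)) (dpImp n h (dpTop n h) (dpTop n h)),
      dpMul n h a (dpTop n h)) = _
    rw [dpImp_of_le h (dp_le_top h a), dpImp_of_le h (le_refl _), min_self,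
      dpMul_top_right h]
  rwa [he] at h3

lemma s_swap (h : 2 ≤ n) (hS : dpAdmissible n h S) {p : Fin n × Fin n}
    (hp : p ∈ S) (h1 : p.1 ≠ dpTop n h) (h2 : p.2 ≤ dpCoatom n h) :
    ((p.2, p.1) : Fin n × Fin n) ∈ S := by
  obtain ⟨p1, p2⟩ := p
  have h3 := (hS.2.2.2 _ hp _ hS.2.1).2.2.2
  have he : dpKhimp n h (p1, p2) (dpBot n h, dpTop n h) = (p2, p1) := by
    show (min (dpImp n h p1 (dpBot n h)) (dpImp n h (dpTop n h) p2),
      dpMul n h p1 (dpTop n h)) = _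
    rw [dpImp_top_left h, dpMul_top_right h]
    congr 1
    by_cases hpb : p1 ≤ dpBot n h
    · rw [dpImp_of_le h hpb]; exact min_eq_right (dp_le_top h p2)
    · rw [dpImp_coatom h hpb h1]; exact min_eq_right h2
  rwa [he] at h3

lemma s_coatom_fst (h : 2 ≤ n) (hS : dpAdmissible n h S) {a : Fin n}
    (ha0 : ¬ a ≤ dpBot n h) (haT : a ≠ dpTop n h) :
    ((dpCoatom n h, a) : Fin n × Fin n) ∈ S := by
  have h3 := (hS.2.2.2 _ (hS.2.2.1 a) _ hS.2.1).2.2.2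
  have he : dpKhimp n h (a, dpTop n h) (dpBot n h, dpTop n h)
      = (dpCoatom n h, a) := by
    show (min (dpImp n h a (dpBot n h)) (dpImp n h (dpTop n h) (dpTop n h)),
      dpMul n h a (dpTop n h)) = _
    rw [dpImp_coatom h ha0 haT, dpImp_of_le h (le_refl _), dpMul_top_right h,
      min_eq_left (dp_coatom_le_top h)]
  rwa [he] at h3

lemma dp_two_le (h4 : 4 ≤ n) : 2 ≤ n := by omega

lemma s_bot_coatom (h4 : 4 ≤ n) (hS : dpAdmissible n (dp_two_le h4) S) :
    ((dpBot n (dp_two_le h4), dpCoatom n (dp_two_le h4)) : Fin n × Fin n) ∈ S := by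
  have h : 2 ≤ n := by omega
  set e : Fin n := ⟨1, by omega⟩ with hedef
  have he0 : ¬ e ≤ dpBot n h := by
    rw [Fin.le_def]; simp only [dpBot, hedef]; omega
  have heT : e ≠ dpTop n h := by
    simp only [Ne, Fin.ext_iff, dpTop, hedef]; omega
  have he1 : ((dpCoatom n h, e) : Fin n × Fin n) ∈ S := s_coatom_fst h hS he0 heT
  have h3 := (hS.2.2.2 _ he1 _ he1).2.2.1
  have hCe : ¬ dpCoatom n h ≤ e := by
    rw [Fin.le_def]; simp only [dpCoatom, hedef]; omega
  have he2 : dpKmul n h (dpCoatom n h, e) (dpCoatom n h, e)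
      = (dpBot n h, dpCoatom n h) := by
    show (dpMul n h (dpCoatom n h) (dpCoatom n h),
      min (dpImp n h (dpCoatom n h) e) (dpImp n h (dpCoatom n h) e)) = _
    rw [dpMul_bot h (dp_coatom_ne_top h) (dp_coatom_ne_top h), min_self,
      dpImp_coatom h hCe (dp_coatom_ne_top h)]
  rwa [he2] at h3

lemma s_coatom_fst_all (h4 : 4 ≤ n) (hS : dpAdmissible n (dp_two_le h4) S) (a : Fin n) :
    ((dpCoatom n (dp_two_le h4), a) : Fin n × Fin n) ∈ S := by
  have h : 2 ≤ n := by omega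
  by_cases haT : a = dpTop n h
  · subst haT; exact hS.2.2.1 _
  by_cases ha0 : a ≤ dpBot n h
  · have : a = dpBot n h := le_antisymm ha0 (by rw [Fin.le_def]; simp [dpBot])
    subst this
    have := s_swap h hS (s_bot_coatom h4 hS) ?h1 ?h2
    · exact this
    case h1 =>
      simp only [Ne, Fin.ext_iff, dpBot, dpTop]; omega
    case h2 => exact le_refl _
  · exact s_coatom_fst h hS ha0 haT

lemma s_coatom_snd_all (h4 : 4 ≤ n) (hS : dpAdmissible n (dp_two_le h4) S) (a : Fin n) :
    ((a, dpCoatom n (dp_two_le h4)) : Fin n × Fin n) ∈ S := by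
  have h : 2 ≤ n := by omega
  by_cases haT : a = dpTop n h
  · subst haT; exact s_top_fst h hS _
  · exact s_swap h hS (s_coatom_fst_all h4 hS a) (dp_coatom_ne_top h)
      (dp_ne_top_le_coatom h haT)

lemma s_Kempty (h4 : 4 ≤ n) (hS : dpAdmissible n (dp_two_le h4) S) :
    dpKempty n (dp_two_le h4) ⊆ S := by
  have h : 2 ≤ n := by omega
  rintro ⟨p1, p2⟩ hp
  rcases hp with h1 | h1 | h1 | h1
  · have h1' : p2 = dpTop n h := h1
    subst h1'; exact hS.2.2.1 p1
  · have h1' : p1 = dpTop n h := h1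
    subst h1'; exact s_top_fst h hS p2
  · have h1' : p2 = dpCoatom n h := h1
    subst h1'; exact s_coatom_snd_all h4 hS p1
  · have h1' : p1 = dpCoatom n h := h1
    subst h1'; exact s_coatom_fst_all h4 hS p2

end DPforward



/-- for `n ≥ 4`, a subset of `K(DP_n)` is the universe of an
admissible subalgebra if and only if it equals `K_n^U` for some up-set `U` of
`X_n`; moreover `K_n^U ⊆ K_n^W` iff `U ⊆ W`. -/
theorem dp_admissible_classification (n : ℕ) (hn : 4 ≤ n) :
    (∀ S : Set (Fin n × Fin n),
      dpAdmissible n (by omega) S ↔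
        ∃ U : Set (Fin n × Fin n), dpIsUpset n U ∧ S = dpKU n (by omega) U) ∧
    (∀ U W : Set (Fin n × Fin n), dpIsUpset n U → dpIsUpset n W →
      (dpKU n (by omega) U ⊆ dpKU n (by omega) W ↔ U ⊆ W)) := by
  have h : 2 ≤ n := by omega
  constructor
  · intro S
    constructor
    · intro hS
      refine ⟨S ∩ dpX n, ⟨Set.inter_subset_right, ?_⟩, ?_⟩
      · rintro p ⟨hpS, hpX⟩ q hqX h1 h2
        refine ⟨?_, hqX⟩
        have j1 := (hS.2.2.2 _ hpS _ (hS.2.2.1 q.1)).1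
        have e1 : dpKjoin n p (q.1, dpTop n h) = (q.1, p.2) := by
          show (max p.1 q.1, min p.2 (dpTop n h)) = _
          rw [max_eq_right h1, min_eq_left (dp_le_top h p.2)]
        rw [e1] at j1
        have j2 := (hS.2.2.2 _ j1 _ (s_top_fst h hS q.2)).2.1
        have e2 : dpKmeet n (q.1, p.2) (dpTop n h, q.2) = q := by
          show (min q.1 (dpTop n h), max p.2 q.2) = q
          rw [min_eq_left (dp_le_top h q.1), max_eq_right h2]
        rwa [e2] at j2
      · ext p
        obtain ⟨p1, p2⟩ := p
        simp only [dpKU, Set.mem_union, Set.mem_setOf_eq]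
        constructor
        · intro hp
          by_cases hv : n - 2 ≤ (p1 : ℕ) ∨ n - 2 ≤ (p2 : ℕ)
          · left
            have := p1.isLt; have := p2.isLt
            simp only [dpKempty, Set.mem_setOf_eq, Fin.ext_iff, dpTop, dpCoatom]
            omega
          push_neg at hv
          right
          by_cases hle : p1 ≤ p2
          · exact Or.inl ⟨hp, hle, by show ((p2:ℕ)) ≤ n - 3; omega⟩
          · have hle' : p2 ≤ p1 := (le_total p1 p2).resolve_left hle
            have hsw := s_swap h hS hp ?h1 ?h2
            · exact Or.inr ⟨hsw, hle', by show ((p1:ℕ)) ≤ n - 3; omega⟩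
            case h1 =>
              show p1 ≠ dpTop n h
              simp only [Ne, Fin.ext_iff, dpTop]; omega
            case h2 =>
              show p2 ≤ dpCoatom n h
              rw [Fin.le_def]; simp only [dpCoatom]; omega
        · intro hp
          rcases hp with hk | hp | hp
          · exact s_Kempty hn hS hk
          · exact hp.1
          · have hq := hp.1
            have hx1 : p2 ≤ p1 := hp.2.1
            have hx2 : (p1 : ℕ) ≤ n - 3 := hp.2.2
            have := s_swap h hS hq ?h1 ?h2
            · exact this
            case h1 =>
              show p2 ≠ dpTop n h
              have := Fin.le_def.mp hx1
              simp only [Ne, Fin.ext_iff, dpTop]; omega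
            case h2 =>
              show p1 ≤ dpCoatom n h
              rw [Fin.le_def]; simp only [dpCoatom]; omega
    · rintro ⟨U, hU, rfl⟩
      refine ⟨Set.mem_union_left _ (Or.inl rfl), Set.mem_union_left _ (Or.inl rfl),
        fun a => Set.mem_union_left _ (Or.inl rfl), fun x hx y hy =>
        ⟨dp_join_closed h hU hx hy, dp_meet_closed h hU hx hy,
         dp_mul_closed h hx hy, dp_himp_closed h hx hy⟩⟩
  · intro U W hU hW
    constructor
    · intro hsub u hu
      obtain ⟨u1, u2⟩ := u
      have h2 := hsub (Set.mem_union_right _ (Or.inl hu))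
      have hx := hU.1 hu
      have hle : u1 ≤ u2 := hx.1
      have hv : (u2 : ℕ) ≤ n - 3 := hx.2
      have hlv := Fin.le_def.mp hle
      rcases h2 with hk | h2 | h2
      · exfalso
        rcases hk with h1 | h1 | h1 | h1 <;>
          simp only [Fin.ext_iff, dpTop, dpCoatom] at h1 <;> omega
      · exact h2
      · have hx2 := hW.1 h2
        have : u2 ≤ u1 := hx2.1
        have heq : u1 = u2 := le_antisymm hle this
        subst heq
        exact h2
    · intro hsub p hp
      rcases hp with hk | hp | hp
      · exact Set.mem_union_left _ hk
      · exact Set.mem_union_right _ (Or.inl (hsub hp))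
      · exact Set.mem_union_right _ (Or.inr (hsub hp))
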